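/- arXiv:1204.1349 — 3 statements merged into one kernel-verified Lean document; each statement's English description precedes it below -/
import Mathlib

section
/- Let G = (V,E) be a P(2,1)-graph containing a vertex v with d(v) = 3 and |N(v)| > 1. Then v is admissible: there exist two distinct vertices u, w ∈ N(v) such that the multigraph obtained from G − v by adding one new edge with endpoints u and w is a P(2,1)-graph. -/
/-! ### Multigraphs: finite vertex set `V`, finite edge set `E`; each edge `e` has
endpoints `src e` and `dst e` (loops and parallel edges are allowed). -/

structure Multigraph (V E : Type) where
  src : E → V
  dst : E → V

namespace Multigraph

variable {V E : Type}

/-- `i(X)`: the number of edges both of whose endpoints lie in `X`. -/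
def iCount [Fintype E] [DecidableEq V] (G : Multigraph V E) (X : Finset V) : ℕ :=
  (Finset.univ.filter fun e => G.src e ∈ X ∧ G.dst e ∈ X).card

/-- The degree of a vertex (a loop contributes 2). -/
def degree [Fintype E] [DecidableEq V] (G : Multigraph V E) (v : V) : ℕ :=
  (Finset.univ.filter fun e => G.src e = v).card +
    (Finset.univ.filter fun e => G.dst e = v).card

/-- The set of neighbours of a vertex. -/
def neighborSet (G : Multigraph V E) (v : V) : Set V :=
  {w | ∃ e, (G.src e = v ∧ G.dst e = w) ∨ (G.src e = w ∧ G.dst e = v)}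

/-- `(k,ℓ)`-sparsity: `i(X) ≤ k|X| − ℓ` for every `X ⊆ V` spanning at least one edge. -/
def Sparse [Fintype E] [DecidableEq V] (G : Multigraph V E) (k l : ℤ) : Prop :=
  ∀ X : Finset V, (∃ e, G.src e ∈ X ∧ G.dst e ∈ X) →
    (G.iCount X : ℤ) ≤ k * (X.card : ℤ) - l

/-- `(k,ℓ)`-tightness: `(k,ℓ)`-sparse and `|E| = k|V| − ℓ`. -/
def Tight [Fintype V] [Fintype E] [DecidableEq V] (G : Multigraph V E) (k l : ℤ) : Prop :=
  G.Sparse k l ∧ (Fintype.card E : ℤ) = k * (Fintype.card V : ℤ) - l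

/-- Delete a single edge. -/
def deleteEdge (G : Multigraph V E) (e₀ : E) : Multigraph V {e : E // e ≠ e₀} :=
  ⟨fun e => G.src e.1, fun e => G.dst e.1⟩

/-- Delete a vertex together with all edges incident to it. -/
def deleteVertex (G : Multigraph V E) (v : V) :
    Multigraph {w : V // w ≠ v} {e : E // G.src e ≠ v ∧ G.dst e ≠ v} :=
  ⟨fun e => ⟨G.src e.1, e.2.1⟩, fun e => ⟨G.dst e.1, e.2.2⟩⟩

/-- Add one new edge with endpoints `u` and `w`. -/
def addEdge (G : Multigraph V E) (u w : V) : Multigraph V (E ⊕ Unit) :=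
  ⟨Sum.elim G.src fun _ => u, Sum.elim G.dst fun _ => w⟩

/-- The subgraph induced by a set of vertices `X`. -/
def induce (G : Multigraph V E) (X : Finset V) :
    Multigraph {v : V // v ∈ X} {e : E // G.src e ∈ X ∧ G.dst e ∈ X} :=
  ⟨fun e => ⟨G.src e.1, e.2.1⟩, fun e => ⟨G.dst e.1, e.2.2⟩⟩

/-- `G` is a `P(2,1)`-graph: `(2,1)`-tight and some edge-deleted graph is `(2,2)`-tight. -/
def IsP21 [Fintype V] [Fintype E] [DecidableEq V] [DecidableEq E] (G : Multigraph V E) : Prop :=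
  G.Tight 2 1 ∧ ∃ e : E, (G.deleteEdge e).Tight 2 2

/-- `G` is a `(2,2)`-circuit: `|E| = 2|V| − 1` and every edge-deleted graph is `(2,2)`-tight. -/
def IsCircuit22 [Fintype V] [Fintype E] [DecidableEq V] [DecidableEq E]
    (G : Multigraph V E) : Prop :=
  (Fintype.card E : ℤ) = 2 * (Fintype.card V : ℤ) - 1 ∧
    ∀ e : E, (G.deleteEdge e).Tight 2 2

/-- `X` is an over-critical set (`i(X) = 2|X| − 1`) of minimum cardinality. -/
def IsMinOverCritical [Fintype E] [DecidableEq V] (G : Multigraph V E) (X : Finset V) : Prop :=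
  (G.iCount X : ℤ) = 2 * (X.card : ℤ) - 1 ∧
    ∀ Y : Finset V, (G.iCount Y : ℤ) = 2 * (Y.card : ℤ) - 1 → X.card ≤ Y.card

/-- `G` is (a copy of) `K₂³`: two distinct vertices joined by three parallel edges. -/
def IsK23 [Fintype E] (G : Multigraph V E) : Prop :=
  ∃ a b : V, a ≠ b ∧ (∀ v : V, v = a ∨ v = b) ∧ Fintype.card E = 3 ∧
    ∀ e : E, (G.src e = a ∧ G.dst e = b) ∨ (G.src e = b ∧ G.dst e = a)

/-- Adjacency via an edge belonging to the edge subset `F`. -/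
def AdjOn (G : Multigraph V E) (F : Set E) (u w : V) : Prop :=
  ∃ e ∈ F, (G.src e = u ∧ G.dst e = w) ∨ (G.src e = w ∧ G.dst e = u)

/-- Connectivity of the multigraph. -/
def Connected (G : Multigraph V E) : Prop :=
  Nonempty V ∧ ∀ u w : V, Relation.ReflTransGen (G.AdjOn Set.univ) u w

/-- 2-edge-connectivity: connected, and still connected after deleting any one edge. -/
def TwoEdgeConnected (G : Multigraph V E) : Prop :=
  G.Connected ∧ ∀ e₀ : E, ∀ u w : V, Relation.ReflTransGen (G.AdjOn {e | e ≠ e₀}) u w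

/-- Adjacency inside the induced subgraph on the vertex set `X`. -/
def AdjIn (G : Multigraph V E) (X : Set V) (u w : V) : Prop :=
  u ∈ X ∧ w ∈ X ∧ ∃ e, (G.src e = u ∧ G.dst e = w) ∨ (G.src e = w ∧ G.dst e = u)

/-- Connectivity of the induced subgraph on the vertex set `X`. -/
def ConnectedOn (G : Multigraph V E) (X : Set V) : Prop :=
  ∀ u ∈ X, ∀ w ∈ X, Relation.ReflTransGen (G.AdjIn X) u w

/-- `T` is the edge set of a spanning tree of `G`:
the spanning subgraph with edge set `T` is connected and `|T| = |V| − 1`. -/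
def IsSpanningTree [Fintype V] (G : Multigraph V E) (T : Finset E) : Prop :=
  (∀ u w : V, Relation.ReflTransGen (G.AdjOn (T : Set E)) u w) ∧ T.card + 1 = Fintype.card V

/-- `M` is the edge set of a spanning connected map-graph of `G`:
the spanning subgraph with edge set `M` is connected and has exactly `|V|` edges
(equivalently, it is connected with exactly one cycle). -/
def IsConnectedSpanningMapGraph [Fintype V] (G : Multigraph V E) (M : Finset E) : Prop :=
  (∀ u w : V, Relation.ReflTransGen (G.AdjOn (M : Set E)) u w) ∧ M.card = Fintype.card V

/-- `(X, F)` describes a subgraph of `G`: every edge of `F` has both endpoints in `X`. -/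
def IsSubgraphOn (G : Multigraph V E) (X : Finset V) (F : Finset E) : Prop :=
  ∀ e ∈ F, G.src e ∈ X ∧ G.dst e ∈ X

end Multigraph


set_option linter.unusedSectionVars false
set_option maxHeartbeats 1000000

namespace Multigraph

section Aux13

lemma card_filter_subtype {α : Type} [Fintype α] (p : α → Prop) [DecidablePred p]
    (q : α → Prop) [DecidablePred q] :
    (Finset.univ.filter (fun x : {a // p a} => q x.1)).card
      = (Finset.univ.filter (fun a => p a ∧ q a)).card := by
  rw [← Fintype.card_subtype, ← Fintype.card_subtype]
  exact Fintype.card_congr (Equiv.subtypeSubtypeEquivSubtypeInter p q)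

lemma card_filter_sum {α β : Type} [Fintype α] [Fintype β] (r : α ⊕ β → Prop)
    [DecidablePred r] :
    (Finset.univ.filter r).card
      = (Finset.univ.filter fun a : α => r (Sum.inl a)).card
        + (Finset.univ.filter fun b : β => r (Sum.inr b)).card := by
  rw [← Fintype.card_subtype, ← Fintype.card_subtype, ← Fintype.card_subtype, ← Fintype.card_sum]
  exact Fintype.card_congr Equiv.subtypeSum

lemma card_filter_unit (r : Unit → Prop) [DecidablePred r] :
    (Finset.univ.filter r).card = if r () then 1 else 0 := by
  by_cases h : r ()
  · rw [if_pos h, Finset.filter_eq_self.mpr]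
    · simp
    · intro x _; cases x; exact h
  · rw [if_neg h, Finset.card_eq_zero, Finset.filter_eq_empty_iff]
    intro x _; cases x; exact h

variable {V E : Type} [Fintype V] [Fintype E] [DecidableEq V] [DecidableEq E]

/-- 1-critical set: `i(X) = 2|X| - 1`. -/
def Crit (G : Multigraph V E) (X : Finset V) : Prop :=
  (G.iCount X : ℤ) = 2 * (X.card : ℤ) - 1

instance (G : Multigraph V E) : DecidablePred G.Crit := fun X => by
  unfold Crit; infer_instance

variable {G : Multigraph V E}

lemma crit_card_pos {X : Finset V} (h : G.Crit X) : 0 < X.card := by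
  rcases Nat.eq_zero_or_pos X.card with h0 | h'
  · exfalso
    rw [Finset.card_eq_zero] at h0
    subst h0
    simp [Crit, iCount] at h
  · exact h'

lemma crit_spans {X : Finset V} (h : G.Crit X) :
    ∃ e, G.src e ∈ X ∧ G.dst e ∈ X := by
  have hc := crit_card_pos h
  have h1 : 1 ≤ (G.iCount X : ℤ) := by rw [h]; omega
  have : (Finset.univ.filter fun e => G.src e ∈ X ∧ G.dst e ∈ X).Nonempty := by
    rw [← Finset.card_pos]; unfold iCount at h1; exact_mod_cast h1
  obtain ⟨e, he⟩ := this
  exact ⟨e, by simpa using (Finset.mem_filter.mp he).2⟩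

lemma iCount_supermodular (G : Multigraph V E) (X Y : Finset V) :
    G.iCount X + G.iCount Y ≤ G.iCount (X ∪ Y) + G.iCount (X ∩ Y) := by
  classical
  set A := Finset.univ.filter fun e => G.src e ∈ X ∧ G.dst e ∈ X with hA
  set B := Finset.univ.filter fun e => G.src e ∈ Y ∧ G.dst e ∈ Y with hB
  have hinter : G.iCount (X ∩ Y) = (A ∩ B).card := by
    unfold iCount
    congr 1
    ext e
    simp only [hA, hB, Finset.mem_inter, Finset.mem_filter, Finset.mem_univ, true_and]
    tauto
  have hunion : (A ∪ B).card ≤ G.iCount (X ∪ Y) := by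
    apply Finset.card_le_card
    intro e he
    simp only [hA, hB, Finset.mem_union, Finset.mem_filter, Finset.mem_univ, true_and,
      iCount] at he ⊢
    tauto
  have hXA : G.iCount X = A.card := rfl
  have hYB : G.iCount Y = B.card := rfl
  have := Finset.card_union_add_card_inter A B
  omega

/-- If two critical sets intersect, then their intersection and union are critical. -/
lemma crit_inter_union (hsp : G.Sparse 2 1) {X Y : Finset V} (hX : G.Crit X) (hY : G.Crit Y)
    (hne : (X ∩ Y).Nonempty) : G.Crit (X ∩ Y) ∧ G.Crit (X ∪ Y) := by
  have hsup := iCount_supermodular G X Y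
  have hcards := Finset.card_union_add_card_inter X Y
  have hXs := hX
  have hYs := hY
  unfold Crit at hXs hYs ⊢
  have hUsp : (G.iCount (X ∪ Y) : ℤ) ≤ 2 * ((X ∪ Y).card : ℤ) - 1 := by
    obtain ⟨e, he1, he2⟩ := crit_spans hX
    exact hsp _ ⟨e, Finset.mem_union_left _ he1, Finset.mem_union_left _ he2⟩
  have hIsp : (G.iCount (X ∩ Y) : ℤ) ≤ 2 * ((X ∩ Y).card : ℤ) - 1 := by
    by_cases hspan : ∃ e, G.src e ∈ X ∩ Y ∧ G.dst e ∈ X ∩ Y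
    · exact hsp _ hspan
    · have hI0 : G.iCount (X ∩ Y) = 0 := by
        unfold iCount
        rw [Finset.card_eq_zero, Finset.filter_eq_empty_iff]
        intro e _ hc
        exact hspan ⟨e, hc⟩
      exfalso
      have hIc : 1 ≤ (X ∩ Y).card := hne.card_pos
      push_cast at hsup hUsp ⊢
      omega
  constructor <;> · push_cast at hsup hUsp hIsp ⊢; omega

lemma iCount_deleteEdge (G : Multigraph V E) (e₀ : E) (X : Finset V) :
    G.iCount X = (G.deleteEdge e₀).iCount X
      + (if G.src e₀ ∈ X ∧ G.dst e₀ ∈ X then 1 else 0) := by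
  classical
  set p : E → Prop := fun e => G.src e ∈ X ∧ G.dst e ∈ X with hp
  have h1 : (G.deleteEdge e₀).iCount X
      = (Finset.univ.filter fun e => e ≠ e₀ ∧ p e).card := by
    unfold iCount deleteEdge
    exact card_filter_subtype (fun e => e ≠ e₀) p
  have hsplit := Finset.card_filter_add_card_filter_not
    (s := Finset.univ.filter p) (p := fun e => e = e₀)
  rw [Finset.filter_filter, Finset.filter_filter] at hsplit
  have h2 : (Finset.univ.filter fun e => p e ∧ e = e₀).card
      = if G.src e₀ ∈ X ∧ G.dst e₀ ∈ X then 1 else 0 := by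
    by_cases hc : p e₀
    · rw [if_pos hc]
      rw [show (Finset.univ.filter fun e => p e ∧ e = e₀) = {e₀} by
        ext e
        simp only [Finset.mem_filter, Finset.mem_univ, true_and, Finset.mem_singleton]
        constructor
        · exact fun h => h.2
        · rintro rfl; exact ⟨hc, rfl⟩]
      simp
    · rw [if_neg hc, Finset.card_eq_zero, Finset.filter_eq_empty_iff]
      rintro e _ ⟨hpe, rfl⟩
      exact hc hpe
  have h3 : (Finset.univ.filter fun e => p e ∧ ¬ (e = e₀)).card
      = (Finset.univ.filter fun e => e ≠ e₀ ∧ p e).card := by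
    congr 1
    ext e
    simp only [Finset.mem_filter, Finset.mem_univ, true_and, ne_eq]
    tauto
  show (Finset.univ.filter p).card = _
  rw [h1, ← h2, ← h3]
  omega

/-- In a `P(2,1)`-graph there is an edge contained in every critical set. -/
lemma crit_contains (hP : G.IsP21) :
    ∃ e₀ : E, ∀ X, G.Crit X → G.src e₀ ∈ X ∧ G.dst e₀ ∈ X := by
  obtain ⟨hT, e₀, hdel⟩ := hP
  refine ⟨e₀, fun X hX => ?_⟩
  by_contra hc
  obtain ⟨e, he1, he2⟩ := crit_spans hX
  have hne : e ≠ e₀ := by rintro rfl; exact hc ⟨he1, he2⟩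
  have hspan : ∃ f : {f : E // f ≠ e₀}, (G.deleteEdge e₀).src f ∈ X ∧ (G.deleteEdge e₀).dst f ∈ X :=
    ⟨⟨e, hne⟩, he1, he2⟩
  have hsp := hdel.1 X hspan
  have heq := iCount_deleteEdge G e₀ X
  rw [if_neg hc] at heq
  unfold Crit at hX
  omega

lemma crit_univ (hT : G.Tight 2 1) : G.Crit (Finset.univ : Finset V) := by
  unfold Crit
  have : G.iCount Finset.univ = Fintype.card E := by
    unfold iCount
    rw [Finset.filter_true_of_mem]
    · simp
    · intro e _; exact ⟨Finset.mem_univ _, Finset.mem_univ _⟩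
  rw [this]
  simpa using hT.2

/-- A minimum critical set, contained in every other critical set. -/
lemma exists_min_crit (hsp : G.Sparse 2 1)
    (hmeet : ∀ X Y : Finset V, G.Crit X → G.Crit Y → (X ∩ Y).Nonempty)
    (hex : ∃ X, G.Crit X) :
    ∃ C, G.Crit C ∧ ∀ X, G.Crit X → C ⊆ X := by
  classical
  obtain ⟨X₀, hX₀⟩ := hex
  set F : Finset (Finset V) := Finset.univ.filter G.Crit with hF
  have hFne : F.Nonempty := ⟨X₀, by simp [hF, hX₀]⟩
  obtain ⟨C, hCF, hCmin⟩ := F.exists_min_image Finset.card hFne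
  have hC : G.Crit C := by simpa [hF] using hCF
  refine ⟨C, hC, fun X hX => ?_⟩
  have hne := hmeet C X hC hX
  have hcrit := (crit_inter_union hsp hC hX hne).1
  have hle : C.card ≤ (C ∩ X).card := hCmin _ (by simp [hF, hcrit])
  have heqCX : C ∩ X = C := Finset.eq_of_subset_of_card_le Finset.inter_subset_left hle
  intro z hz
  rw [← heqCX] at hz
  exact (Finset.mem_inter.mp hz).2

/-- A `(2,1)`-tight graph whose critical sets pairwise intersect is a `P(2,1)`-graph. -/
lemma isP21_of_meet (hT : G.Tight 2 1)
    (hmeet : ∀ X Y : Finset V, G.Crit X → G.Crit Y → (X ∩ Y).Nonempty) :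
    G.IsP21 := by
  obtain ⟨C, hC, hCmin⟩ := exists_min_crit hT.1 hmeet ⟨Finset.univ, crit_univ hT⟩
  obtain ⟨e₀, he₀1, he₀2⟩ := crit_spans hC
  refine ⟨hT, e₀, ?_, ?_⟩
  · -- sparsity of `G - e₀` with count (2,2)
    intro X hspan
    obtain ⟨f, hf1, hf2⟩ := hspan
    have hXspan : ∃ e, G.src e ∈ X ∧ G.dst e ∈ X := ⟨f.1, hf1, hf2⟩
    have hsp := hT.1 X hXspan
    have heq := iCount_deleteEdge G e₀ X
    by_cases hcrit : G.Crit X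
    · have hsub := hCmin X hcrit
      rw [if_pos ⟨hsub he₀1, hsub he₀2⟩] at heq
      unfold Crit at hcrit
      omega
    · unfold Crit at hcrit
      have : (G.iCount X : ℤ) ≤ 2 * (X.card : ℤ) - 2 := by omega
      split_ifs at heq <;> omega
  · -- count
    have hcard : Fintype.card {e : E // e ≠ e₀} = Fintype.card E - 1 := by
      have h := Fintype.card_subtype_compl (α := E) (p := fun e => e = e₀)
      simpa [Fintype.card_subtype_eq] using h
    have hE : 1 ≤ Fintype.card E := by
      have := Fintype.card_pos_iff.mpr ⟨e₀⟩; omega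
    have h2 := hT.2
    have h3 : (Fintype.card {e : E // e ≠ e₀} : ℤ) = (Fintype.card E : ℤ) - 1 := by
      rw [hcard]
      push_cast [Nat.cast_sub hE]
      ring
    rw [h3]
    omega

section Transfer

/-- values of a finset of subtypes -/
lemma mem_image_val_iff {v : V} (X : Finset {a : V // a ≠ v}) (z : {a : V // a ≠ v}) :
    z ∈ X ↔ z.1 ∈ X.image Subtype.val := by
  constructor
  · exact fun h => Finset.mem_image_of_mem _ h
  · intro h
    obtain ⟨z', hz', hzz⟩ := Finset.mem_image.mp h
    rwa [show z' = z from Subtype.ext hzz] at hz'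

lemma v_not_mem_image {v : V} (X : Finset {a : V // a ≠ v}) :
    v ∉ X.image Subtype.val := by
  intro h
  obtain ⟨z, _, hz⟩ := Finset.mem_image.mp h
  exact z.2 hz

lemma image_val_subset_erase {v : V} (X : Finset {a : V // a ≠ v}) :
    X.image Subtype.val ⊆ Finset.univ.erase v := by
  intro z hz
  obtain ⟨z', _, rfl⟩ := Finset.mem_image.mp hz
  exact Finset.mem_erase.mpr ⟨z'.2, Finset.mem_univ _⟩

lemma card_image_val {v : V} (X : Finset {a : V // a ≠ v}) :
    (X.image Subtype.val).card = X.card :=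
  Finset.card_image_of_injective _ Subtype.val_injective

lemma inter_nonempty_of_image {v : V} {X₁ X₂ : Finset {a : V // a ≠ v}}
    (h : (X₁.image Subtype.val ∩ X₂.image Subtype.val).Nonempty) :
    (X₁ ∩ X₂).Nonempty := by
  obtain ⟨z, hz⟩ := h
  rw [Finset.mem_inter] at hz
  obtain ⟨z', hz', rfl⟩ := Finset.mem_image.mp hz.1
  exact ⟨z', Finset.mem_inter.mpr ⟨hz', (mem_image_val_iff X₂ z').mpr hz.2⟩⟩

/-- The key count identity for `(G - v) + uw`. -/
lemma iCount_addDel (G : Multigraph V E) (v : V) (u w : {a : V // a ≠ v})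
    (X : Finset {a : V // a ≠ v}) :
    ((G.deleteVertex v).addEdge u w).iCount X
      = G.iCount (X.image Subtype.val) + (if u ∈ X ∧ w ∈ X then 1 else 0) := by
  classical
  set Y := X.image Subtype.val with hY
  unfold iCount addEdge deleteVertex
  rw [card_filter_sum]
  congr 1
  · -- old edges
    simp only [Sum.elim_inl]
    have h1 : ∀ e : {e : E // G.src e ≠ v ∧ G.dst e ≠ v}, e ∈ (Finset.univ : Finset _) →
        (((⟨G.src e.1, e.2.1⟩ : {a : V // a ≠ v}) ∈ X ∧
            (⟨G.dst e.1, e.2.2⟩ : {a : V // a ≠ v}) ∈ X)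
          ↔ (G.src e.1 ∈ Y ∧ G.dst e.1 ∈ Y)) := fun e _ =>
      ⟨fun h => ⟨(mem_image_val_iff X _).mp h.1, (mem_image_val_iff X _).mp h.2⟩,
       fun h => ⟨(mem_image_val_iff X _).mpr h.1, (mem_image_val_iff X _).mpr h.2⟩⟩
    refine (congrArg Finset.card (Finset.filter_congr h1)).trans ?_
    rw [card_filter_subtype (fun e : E => G.src e ≠ v ∧ G.dst e ≠ v)
      (fun e : E => G.src e ∈ Y ∧ G.dst e ∈ Y)]
    congr 1
    ext e
    simp only [Finset.mem_filter, Finset.mem_univ, true_and]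
    constructor
    · rintro ⟨_, h⟩; exact h
    · intro h
      have h' := h
      rw [hY] at h'
      exact ⟨⟨fun hs => v_not_mem_image X (hs ▸ h'.1), fun hd => v_not_mem_image X (hd ▸ h'.2)⟩, h⟩
  · simp only [Sum.elim_inr]
    exact card_filter_unit (fun _ => u ∈ X ∧ w ∈ X)

end Transfer

section NearV

variable (G : Multigraph V E) (v : V)

/-- The edges incident to `v`. -/
def edgesAt : Finset E := Finset.univ.filter fun e => G.src e = v ∨ G.dst e = v

/-- The other endpoint of an edge incident to `v`. -/
def otherEnd (e : E) : V := if G.src e = v then G.dst e else G.src e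

variable {G v}

lemma card_edgesAt (hnl : ∀ e, ¬(G.src e = v ∧ G.dst e = v)) :
    (G.edgesAt v).card = G.degree v := by
  unfold edgesAt degree
  rw [Finset.filter_or, Finset.card_union_of_disjoint]
  rw [Finset.disjoint_filter]
  intro e _ hs hd
  exact hnl e ⟨hs, hd⟩

lemma otherEnd_spec {e : E} (he : e ∈ G.edgesAt v) :
    (G.src e = v ∧ G.dst e = G.otherEnd v e) ∨ (G.src e = G.otherEnd v e ∧ G.dst e = v) := by
  unfold edgesAt at he
  rw [Finset.mem_filter] at he
  unfold otherEnd
  rcases he.2 with hs | hd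
  · rw [if_pos hs]; exact Or.inl ⟨hs, rfl⟩
  · by_cases hs : G.src e = v
    · rw [if_pos hs]; exact Or.inl ⟨hs, rfl⟩
    · rw [if_neg hs]; exact Or.inr ⟨rfl, hd⟩

lemma otherEnd_ne (hnl : ∀ e, ¬(G.src e = v ∧ G.dst e = v)) {e : E} (he : e ∈ G.edgesAt v) :
    G.otherEnd v e ≠ v := by
  intro hc
  rcases otherEnd_spec he with ⟨h1, h2⟩ | ⟨h1, h2⟩
  · exact hnl e ⟨h1, by rw [h2, hc]⟩
  · exact hnl e ⟨by rw [h1, hc], h2⟩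

lemma otherEnd_mem_nbr {e : E} (he : e ∈ G.edgesAt v) :
    G.otherEnd v e ∈ G.neighborSet v := by
  rcases otherEnd_spec he with ⟨h1, h2⟩ | ⟨h1, h2⟩
  · exact ⟨e, Or.inl ⟨h1, h2⟩⟩
  · exact ⟨e, Or.inr ⟨h1, h2⟩⟩


lemma neighborSet_eq (hnl : ∀ e, ¬(G.src e = v ∧ G.dst e = v)) :
    G.neighborSet v = ↑((G.edgesAt v).image (G.otherEnd v)) := by
  ext x
  simp only [Finset.coe_image, Set.mem_image, Finset.mem_coe]
  constructor
  · rintro ⟨e, ⟨h1, h2⟩ | ⟨h1, h2⟩⟩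
    · refine ⟨e, Finset.mem_filter.mpr ⟨Finset.mem_univ _, Or.inl h1⟩, ?_⟩
      unfold otherEnd
      rw [if_pos h1]; exact h2
    · refine ⟨e, Finset.mem_filter.mpr ⟨Finset.mem_univ _, Or.inr h2⟩, ?_⟩
      unfold otherEnd
      by_cases hs : G.src e = v
      · exact absurd ⟨hs, h2⟩ (hnl e)
      · rw [if_neg hs]; exact h1
  · rintro ⟨e, he, rfl⟩
    exact otherEnd_mem_nbr he

lemma iCount_insert (hnl : ∀ e, ¬(G.src e = v ∧ G.dst e = v)) {W : Finset V} (hvW : v ∉ W) :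
    G.iCount (insert v W)
      = G.iCount W + ((G.edgesAt v).filter fun e => G.otherEnd v e ∈ W).card := by
  classical
  set pin : E → Prop := fun e => G.src e ∈ insert v W ∧ G.dst e ∈ insert v W with hpin
  have hsplit := Finset.card_filter_add_card_filter_not
    (s := Finset.univ.filter pin) (p := fun e => G.src e = v ∨ G.dst e = v)
  rw [Finset.filter_filter, Finset.filter_filter] at hsplit
  have h1 : (Finset.univ.filter fun e => pin e ∧ (G.src e = v ∨ G.dst e = v))
      = (G.edgesAt v).filter fun e => G.otherEnd v e ∈ W := by
    ext e
    unfold edgesAt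
    simp only [Finset.mem_filter, Finset.mem_univ, true_and, hpin]
    constructor
    · rintro ⟨⟨hsm, hdm⟩, hat⟩
      refine ⟨hat, ?_⟩
      have heAt : e ∈ G.edgesAt v := Finset.mem_filter.mpr ⟨Finset.mem_univ _, hat⟩
      rcases otherEnd_spec heAt with ⟨h1, h2⟩ | ⟨h1, h2⟩
      · rcases Finset.mem_insert.mp hdm with hv | hw
        · exact absurd ⟨h1, hv⟩ (hnl e)
        · rwa [h2] at hw
      · rcases Finset.mem_insert.mp hsm with hv | hw
        · exact absurd ⟨hv, h2⟩ (hnl e)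
        · rwa [h1] at hw
    · rintro ⟨hat, how⟩
      refine ⟨?_, hat⟩
      have heAt : e ∈ G.edgesAt v := Finset.mem_filter.mpr ⟨Finset.mem_univ _, hat⟩
      rcases otherEnd_spec heAt with ⟨h1, h2⟩ | ⟨h1, h2⟩
      · exact ⟨Finset.mem_insert.mpr (Or.inl h1),
          Finset.mem_insert.mpr (Or.inr (by rw [h2]; exact how))⟩
      · exact ⟨Finset.mem_insert.mpr (Or.inr (by rw [h1]; exact how)),
          Finset.mem_insert.mpr (Or.inl h2)⟩
  have h2 : (Finset.univ.filter fun e => pin e ∧ ¬(G.src e = v ∨ G.dst e = v))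
      = Finset.univ.filter fun e => G.src e ∈ W ∧ G.dst e ∈ W := by
    ext e
    simp only [Finset.mem_filter, Finset.mem_univ, true_and, hpin, not_or]
    constructor
    · rintro ⟨⟨hsm, hdm⟩, hsv, hdv⟩
      exact ⟨(Finset.mem_insert.mp hsm).resolve_left hsv,
        (Finset.mem_insert.mp hdm).resolve_left hdv⟩
    · rintro ⟨hsw, hdw⟩
      refine ⟨⟨Finset.mem_insert_of_mem hsw, Finset.mem_insert_of_mem hdw⟩, ?_, ?_⟩
      · rintro rfl; exact hvW hsw
      · rintro rfl; exact hvW hdw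
  rw [h1, h2] at hsplit
  have hW : G.iCount W = (Finset.univ.filter fun e => G.src e ∈ W ∧ G.dst e ∈ W).card := rfl
  show (Finset.univ.filter pin).card = _
  omega

lemma card_edges_not_at :
    Fintype.card {e : E // G.src e ≠ v ∧ G.dst e ≠ v} + (G.edgesAt v).card = Fintype.card E := by
  classical
  rw [Fintype.card_subtype]
  have hsplit := Finset.card_filter_add_card_filter_not
    (s := (Finset.univ : Finset E)) (p := fun e => G.src e = v ∨ G.dst e = v)
  have h1 : (Finset.univ.filter fun e => ¬(G.src e = v ∨ G.dst e = v))
      = Finset.univ.filter fun e => G.src e ≠ v ∧ G.dst e ≠ v := by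
    ext e; simp [not_or]
  rw [h1] at hsplit
  unfold edgesAt
  rw [Finset.card_univ] at hsplit
  omega

end NearV

section Keystone

variable {G : Multigraph V E}

lemma card_subtype_ne_int (v : V) :
    (Fintype.card {a : V // a ≠ v} : ℤ) = (Fintype.card V : ℤ) - 1 := by
  have h : Fintype.card {a : V // a ≠ v} = Fintype.card V - 1 := by
    have h := Fintype.card_subtype_compl (α := V) (p := fun a => a = v)
    simpa [Fintype.card_subtype_eq] using h
  have hV : 1 ≤ Fintype.card V := Fintype.card_pos_iff.mpr ⟨v⟩
  rw [h]
  push_cast [Nat.cast_sub hV]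
  ring

/-- The keystone lemma: sufficient conditions for `(G - v) + uw` to be a `P(2,1)`-graph. -/
lemma keystone (hT : G.Tight 2 1) {v : V}
    (hS3 : (G.edgesAt v).card = 3)
    (hmeetG : ∀ X Y : Finset V, G.Crit X → G.Crit Y → (X ∩ Y).Nonempty)
    (u w : {a : V // a ≠ v}) (huw : u ≠ w)
    (hα : ∀ Y : Finset V, Y ⊆ Finset.univ.erase v → u.1 ∈ Y → w.1 ∈ Y → ¬ G.Crit Y)
    (hβ : ∀ Y : Finset V, Y ⊆ Finset.univ.erase v → u.1 ∈ Y → w.1 ∈ Y →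
      (G.iCount Y : ℤ) = 2 * (Y.card : ℤ) - 2 →
      ∀ P : Finset V, P ⊆ Finset.univ.erase v → G.Crit P → (Y ∩ P).Nonempty) :
    ((G.deleteVertex v).addEdge u w).IsP21 := by
  have huw' : u.1 ≠ w.1 := fun h => huw (Subtype.ext h)
  -- counting
  have hE := card_edges_not_at (G := G) (v := v)
  rw [hS3] at hE
  have hcV := card_subtype_ne_int v
  have hcE2 : (Fintype.card ({e : E // G.src e ≠ v ∧ G.dst e ≠ v} ⊕ Unit) : ℤ)
      = 2 * (Fintype.card {a : V // a ≠ v} : ℤ) - 1 := by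
    rw [Fintype.card_sum, Fintype.card_unit, hcV]
    have h2 := hT.2
    push_cast
    omega
  -- sparsity
  have hsp2 : ((G.deleteVertex v).addEdge u w).Sparse 2 1 := by
    intro X hspan
    have hkey := iCount_addDel G v u w X
    have hcard := card_image_val X
    set Y := X.image Subtype.val with hYdef
    by_cases hin : u ∈ X ∧ w ∈ X
    · rw [if_pos hin] at hkey
      have huY : u.1 ∈ Y := (mem_image_val_iff X u).mp hin.1
      have hwY : w.1 ∈ Y := (mem_image_val_iff X w).mp hin.2
      have hbound : (G.iCount Y : ℤ) ≤ 2 * (Y.card : ℤ) - 2 := by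
        by_cases hspanY : ∃ e, G.src e ∈ Y ∧ G.dst e ∈ Y
        · have hs := hT.1 Y hspanY
          have hnc := hα Y (image_val_subset_erase X) huY hwY
          unfold Crit at hnc
          omega
        · have h0 : G.iCount Y = 0 := by
            unfold iCount
            rw [Finset.card_eq_zero, Finset.filter_eq_empty_iff]
            intro e _ hc
            exact hspanY ⟨e, hc⟩
          have h2 : 1 < Y.card := Finset.one_lt_card.mpr ⟨u.1, huY, w.1, hwY, huw'⟩
          omega
      omega
    · rw [if_neg hin] at hkey
      obtain ⟨e, he1, he2⟩ := hspan
      rcases e with e' | e'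
      · -- an old edge is spanned
        simp only [addEdge, deleteVertex, Sum.elim_inl] at he1 he2
        have hspanY : ∃ e, G.src e ∈ Y ∧ G.dst e ∈ Y :=
          ⟨e'.1, (mem_image_val_iff X _).mp he1, (mem_image_val_iff X _).mp he2⟩
        have hs := hT.1 Y hspanY
        omega
      · simp only [addEdge, deleteVertex, Sum.elim_inr] at he1 he2
        exact absurd ⟨he1, he2⟩ hin
  -- pairwise meeting of critical sets
  have hmeet2 : ∀ X1 X2 : Finset {a : V // a ≠ v},
      ((G.deleteVertex v).addEdge u w).Crit X1 →
      ((G.deleteVertex v).addEdge u w).Crit X2 → (X1 ∩ X2).Nonempty := by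
    intro X1 X2 hX1 hX2
    unfold Crit at hX1 hX2
    rw [iCount_addDel] at hX1 hX2
    rw [← card_image_val X1] at hX1
    rw [← card_image_val X2] at hX2
    by_cases hin1 : u ∈ X1 ∧ w ∈ X1 <;> by_cases hin2 : u ∈ X2 ∧ w ∈ X2
    · exact ⟨u, Finset.mem_inter.mpr ⟨hin1.1, hin2.1⟩⟩
    · -- X1 type-2, X2 critical in G
      rw [if_pos hin1] at hX1
      rw [if_neg hin2] at hX2
      have h1 : (G.iCount (X1.image Subtype.val) : ℤ)
          = 2 * ((X1.image Subtype.val).card : ℤ) - 2 := by push_cast at hX1 ⊢; omega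
      have h2 : G.Crit (X2.image Subtype.val) := by unfold Crit; push_cast at hX2 ⊢; omega
      exact inter_nonempty_of_image (hβ _ (image_val_subset_erase X1)
        ((mem_image_val_iff X1 u).mp hin1.1) ((mem_image_val_iff X1 w).mp hin1.2) h1
        _ (image_val_subset_erase X2) h2)
    · -- X2 type-2, X1 critical in G
      rw [if_neg hin1] at hX1
      rw [if_pos hin2] at hX2
      have h2 : (G.iCount (X2.image Subtype.val) : ℤ)
          = 2 * ((X2.image Subtype.val).card : ℤ) - 2 := by push_cast at hX2 ⊢; omega
      have h1 : G.Crit (X1.image Subtype.val) := by unfold Crit; push_cast at hX1 ⊢; omega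
      have := inter_nonempty_of_image (hβ _ (image_val_subset_erase X2)
        ((mem_image_val_iff X2 u).mp hin2.1) ((mem_image_val_iff X2 w).mp hin2.2) h2
        _ (image_val_subset_erase X1) h1)
      rwa [Finset.inter_comm] at this
    · rw [if_neg hin1] at hX1
      rw [if_neg hin2] at hX2
      have h1 : G.Crit (X1.image Subtype.val) := by unfold Crit; push_cast at hX1 ⊢; omega
      have h2 : G.Crit (X2.image Subtype.val) := by unfold Crit; push_cast at hX2 ⊢; omega
      exact inter_nonempty_of_image (hmeetG _ _ h1 h2)
  exact isP21_of_meet ⟨hsp2, hcE2⟩ hmeet2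

end Keystone

end Aux13

end Multigraph

/-- In a `P(2,1)`-graph, every vertex `v` with `d(v) = 3` and
`|N(v)| > 1` is admissible. -/
theorem statement_13 {V E : Type} [Fintype V] [Fintype E] [DecidableEq V] [DecidableEq E]
    (G : Multigraph V E) (hG : G.IsP21) (v : V) (hdeg : G.degree v = 3)
    (hN : 1 < (G.neighborSet v).ncard) :
    ∃ u w : {a : V // a ≠ v}, (u : V) ∈ G.neighborSet v ∧ (w : V) ∈ G.neighborSet v ∧
      u ≠ w ∧ ((G.deleteVertex v).addEdge u w).IsP21 := by
  classical
  obtain ⟨e₀, hsd⟩ := Multigraph.crit_contains hG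
  have hT := hG.1
  have hsp := hT.1
  have hmeetG : ∀ X Y : Finset V, G.Crit X → G.Crit Y → (X ∩ Y).Nonempty := fun X Y hX hY =>
    ⟨G.src e₀, Finset.mem_inter.mpr ⟨(hsd X hX).1, (hsd Y hY).1⟩⟩
  -- Step A: no loop at `v`
  have hnl : ∀ e, ¬(G.src e = v ∧ G.dst e = v) := by
    rintro e ⟨hes, hed⟩
    obtain ⟨_, e₀', hdel⟩ := hG
    -- every loop at `v` is the distinguished edge
    have hloop : ∀ f, G.src f = v → G.dst f = v → f = e₀' := by
      intro f hfs hfd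
      by_contra hne
      have hspan : ∃ g : {g : E // g ≠ e₀'}, (G.deleteEdge e₀').src g ∈ ({v} : Finset V) ∧
          (G.deleteEdge e₀').dst g ∈ ({v} : Finset V) :=
        ⟨⟨f, hne⟩, by simp [Multigraph.deleteEdge, hfs], by simp [Multigraph.deleteEdge, hfd]⟩
      have hb := hdel.1 {v} hspan
      have h1 : 0 < (G.deleteEdge e₀').iCount {v} :=
        Finset.card_pos.mpr ⟨⟨f, hne⟩, Finset.mem_filter.mpr
          ⟨Finset.mem_univ _, by simp [Multigraph.deleteEdge, hfs, hfd]⟩⟩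
      simp only [Finset.card_singleton] at hb
      omega
    have hL : Finset.univ.filter (fun f => G.src f = v ∧ G.dst f = v) = {e} := by
      ext f
      simp only [Finset.mem_filter, Finset.mem_univ, true_and, Finset.mem_singleton]
      constructor
      · rintro ⟨h1, h2⟩
        rw [hloop f h1 h2, ← hloop e hes hed]
      · rintro rfl
        exact ⟨hes, hed⟩
    have hcard2 : (G.edgesAt v).card = 2 := by
      have hdeg' := hdeg
      unfold Multigraph.degree at hdeg'
      have hui := Finset.card_union_add_card_inter
        (Finset.univ.filter fun f => G.src f = v) (Finset.univ.filter fun f => G.dst f = v)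
      rw [← Finset.filter_or, ← Finset.filter_and, hL] at hui
      unfold Multigraph.edgesAt
      simp only [Finset.card_singleton] at hui
      omega
    have hvcrit : G.Crit {v} := by
      unfold Multigraph.Crit
      have h1 : 0 < G.iCount {v} := Finset.card_pos.mpr
        ⟨e, Finset.mem_filter.mpr ⟨Finset.mem_univ _, by simp [hes, hed]⟩⟩
      have h2 := hsp {v} ⟨e, by simp [hes], by simp [hed]⟩
      simp only [Finset.card_singleton] at h2 ⊢
      push_cast at h2 ⊢
      omega
    have hYcount : G.iCount (Finset.univ.erase v) + (G.edgesAt v).card = Fintype.card E := by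
      have h := Multigraph.card_edges_not_at (G := G) (v := v)
      rw [Fintype.card_subtype] at h
      have heq : (Finset.univ.filter fun f => G.src f ≠ v ∧ G.dst f ≠ v)
          = (Finset.univ.filter fun f =>
              G.src f ∈ Finset.univ.erase v ∧ G.dst f ∈ Finset.univ.erase v) := by
        ext f
        simp [Finset.mem_erase]
      rw [heq] at h
      exact h
    have hYcard : (Finset.univ.erase v).card + 1 = Fintype.card V := by
      rw [Finset.card_erase_of_mem (Finset.mem_univ v), Finset.card_univ]
      exact Nat.sub_add_cancel (Fintype.card_pos_iff.mpr ⟨v⟩)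
    have hYcrit : G.Crit (Finset.univ.erase v) := by
      unfold Multigraph.Crit
      have h2 := hT.2
      rw [hcard2] at hYcount
      have hc1 : ((Finset.univ.erase v).card : ℤ) + 1 = (Fintype.card V : ℤ) := by
        exact_mod_cast congrArg (Nat.cast : ℕ → ℤ) hYcard
      have hc2 : (G.iCount (Finset.univ.erase v) : ℤ) + 2 = (Fintype.card E : ℤ) := by
        exact_mod_cast congrArg (Nat.cast : ℕ → ℤ) hYcount
      omega
    obtain ⟨z, hz⟩ := hmeetG {v} _ hvcrit hYcrit
    simp only [Finset.mem_inter, Finset.mem_singleton, Finset.mem_erase] at hz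
    exact hz.2.1 hz.1
  have hS3 : (G.edgesAt v).card = 3 := by rw [Multigraph.card_edgesAt hnl, hdeg]
  set NS : Finset V := (G.edgesAt v).image (G.otherEnd v) with hNSdef
  have hmemNS : ∀ z ∈ NS, z ∈ G.neighborSet v ∧ z ≠ v := by
    intro z hz
    obtain ⟨e, he, rfl⟩ := Finset.mem_image.mp hz
    exact ⟨Multigraph.otherEnd_mem_nbr he, Multigraph.otherEnd_ne hnl he⟩
  have hNc : 1 < NS.card := by
    rwa [Multigraph.neighborSet_eq hnl, Set.ncard_coe_finset] at hN
  obtain ⟨x, hx, y, hy, hxy⟩ := Finset.one_lt_card.mp hNc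
  obtain ⟨C, hC, hCmin⟩ := Multigraph.exists_min_crit hsp hmeetG
    ⟨Finset.univ, Multigraph.crit_univ hT⟩
  have hCne : C.Nonempty := Finset.card_pos.mp (Multigraph.crit_card_pos hC)
  -- a uniform way to produce the final answer
  have build : ∀ p q : V, p ∈ NS → q ∈ NS → p ≠ q →
      (∀ Y : Finset V, Y ⊆ Finset.univ.erase v → p ∈ Y → q ∈ Y → ¬ G.Crit Y) →
      (∀ Y : Finset V, Y ⊆ Finset.univ.erase v → p ∈ Y → q ∈ Y →
        (G.iCount Y : ℤ) = 2 * (Y.card : ℤ) - 2 →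
        ∀ P : Finset V, P ⊆ Finset.univ.erase v → G.Crit P → (Y ∩ P).Nonempty) →
      (∃ u w : {a : V // a ≠ v}, (u : V) ∈ G.neighborSet v ∧ (w : V) ∈ G.neighborSet v ∧
        u ≠ w ∧ ((G.deleteVertex v).addEdge u w).IsP21) := by
    intro p q hp hq hpq hαp hβp
    have hpv : p ≠ v := (hmemNS p hp).2
    have hqv : q ≠ v := (hmemNS q hq).2
    have hne : (⟨p, hpv⟩ : {a : V // a ≠ v}) ≠ ⟨q, hqv⟩ := by
      intro h
      exact hpq (congrArg Subtype.val h)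
    exact ⟨⟨p, hpv⟩, ⟨q, hqv⟩, (hmemNS p hp).1, (hmemNS q hq).1, hne,
      Multigraph.keystone hT hS3 hmeetG _ _ hne hαp hβp⟩
  by_cases hvC : v ∈ C
  · -- Case 1: `v` lies in the minimum critical set; any pair of neighbours works
    refine build x y hx hy hxy ?_ ?_
    · intro Y hYsub _ _ hcrit
      exact absurd rfl (Finset.mem_erase.mp (hYsub (hCmin Y hcrit hvC))).1
    · intro Y _ _ _ _ P hPsub hPcrit
      exact absurd rfl (Finset.mem_erase.mp (hPsub (hCmin P hPcrit hvC))).1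
  · -- Case 2: `v` is not in the minimum critical set
    have hCsub : C ⊆ Finset.univ.erase v := fun z hz =>
      Finset.mem_erase.mpr ⟨fun h => hvC (h ▸ hz), Finset.mem_univ _⟩
    -- maximal critical set avoiding v
    set F : Finset (Finset V) :=
      Finset.univ.filter (fun Y => G.Crit Y ∧ Y ⊆ Finset.univ.erase v) with hFdef
    obtain ⟨M, hMF, hMmax'⟩ := F.exists_max_image Finset.card ⟨C, by simp [hFdef, hC, hCsub]⟩
    have hMcrit : G.Crit M := ((Finset.mem_filter.mp hMF).2).1
    have hMsub : M ⊆ Finset.univ.erase v := ((Finset.mem_filter.mp hMF).2).2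
    have hMmax : ∀ Y, G.Crit Y → Y ⊆ Finset.univ.erase v → Y ⊆ M := by
      intro Y hYc hYsub
      have hcu := (Multigraph.crit_inter_union hsp hYc hMcrit (hmeetG Y M hYc hMcrit)).2
      have hYMsub : Y ∪ M ⊆ Finset.univ.erase v := Finset.union_subset hYsub hMsub
      have hle : (Y ∪ M).card ≤ M.card := hMmax' _ (by simp [hFdef, hcu, hYMsub])
      have heq : M = Y ∪ M := Finset.eq_of_subset_of_card_le Finset.subset_union_right hle
      intro z hz
      rw [heq]
      exact Finset.mem_union_left _ hz
    -- contradiction helpers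
    have hnocrit : ∀ Wset : Finset V, (∀ z ∈ C, z ∉ Wset) → ¬ G.Crit (insert v Wset) := by
      intro Wset hdis hcrit
      obtain ⟨z, hz⟩ := hCne
      rcases Finset.mem_insert.mp (hCmin _ hcrit hz) with rfl | hzW
      · exact hvC hz
      · exact hdis z hz hzW
    have hkey2 : ∀ Wset : Finset V, Wset ⊆ Finset.univ.erase v →
        (∀ e ∈ G.edgesAt v, G.otherEnd v e ∈ Wset) →
        (2 * (Wset.card : ℤ) - 2 ≤ (G.iCount Wset : ℤ)) →
        (∀ z ∈ C, z ∉ Wset) → False := by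
      intro Wset hsub hall hged hdis
      have hvW : v ∉ Wset := fun h => (Finset.mem_erase.mp (hsub h)).1 rfl
      have hins := Multigraph.iCount_insert hnl hvW
      rw [Finset.filter_true_of_mem hall, hS3] at hins
      have hEne : (G.edgesAt v).Nonempty := Finset.card_pos.mp (by omega)
      obtain ⟨e, he⟩ := hEne
      have hspan : ∃ f, G.src f ∈ insert v Wset ∧ G.dst f ∈ insert v Wset := by
        rcases Multigraph.otherEnd_spec he with ⟨h1, h2⟩ | ⟨h1, h2⟩
        · exact ⟨e, by rw [h1]; exact Finset.mem_insert_self _ _,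
            by rw [h2]; exact Finset.mem_insert_of_mem (hall e he)⟩
        · exact ⟨e, by rw [h1]; exact Finset.mem_insert_of_mem (hall e he),
            by rw [h2]; exact Finset.mem_insert_self _ _⟩
      have hsps := hsp _ hspan
      have hcins : (insert v Wset).card = Wset.card + 1 := Finset.card_insert_of_notMem hvW
      have hcrit : G.Crit (insert v Wset) := by
        unfold Multigraph.Crit
        rw [hins, hcins] at hsps ⊢
        push_cast at hsps ⊢
        omega
      exact hnocrit Wset hdis hcrit
    -- an edge from `v` leaving `M`
    have hexA : ∃ e ∈ G.edgesAt v, G.otherEnd v e ∉ M := by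
      by_contra hcon
      push_neg at hcon
      have hvM : v ∉ M := fun h => (Finset.mem_erase.mp (hMsub h)).1 rfl
      have hins := Multigraph.iCount_insert hnl hvM
      rw [Finset.filter_true_of_mem hcon, hS3] at hins
      obtain ⟨f, hf1, hf2⟩ := Multigraph.crit_spans hMcrit
      have hsps := hsp (insert v M)
        ⟨f, Finset.mem_insert_of_mem hf1, Finset.mem_insert_of_mem hf2⟩
      have hcins : (insert v M).card = M.card + 1 := Finset.card_insert_of_notMem hvM
      have hMc := hMcrit
      unfold Multigraph.Crit at hMc
      rw [hins, hcins] at hsps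
      push_cast at hsps hMc
      omega
    obtain ⟨ea, hea, haM⟩ := hexA
    set a := G.otherEnd v ea with hadef
    have haNS : a ∈ NS := Finset.mem_image_of_mem _ hea
    -- pick b ≠ a
    have hbex : ∃ b ∈ NS, b ≠ a := by
      rcases eq_or_ne x a with h | h
      · exact ⟨y, hy, fun hc => hxy (h ▸ hc ▸ rfl)⟩
      · exact ⟨x, hx, h⟩
    obtain ⟨b, hbNS, hba⟩ := hbex
    -- hα holds for any pair containing a
    have hαa : ∀ Y : Finset V, Y ⊆ Finset.univ.erase v → a ∈ Y → ¬ G.Crit Y :=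
      fun Y hsub haY hcrit => haM (hMmax Y hcrit hsub haY)
    by_cases hb1 : ∀ Y : Finset V, Y ⊆ Finset.univ.erase v → a ∈ Y → b ∈ Y →
        (G.iCount Y : ℤ) = 2 * (Y.card : ℤ) - 2 →
        ∀ P : Finset V, P ⊆ Finset.univ.erase v → G.Crit P → (Y ∩ P).Nonempty
    · exact build a b haNS hbNS (fun h => hba h.symm)
        (fun Y hsub haY _ => hαa Y hsub haY) hb1
    · push_neg at hb1
      obtain ⟨Y₁, hY₁sub, haY₁, hbY₁, hi₁, P₁, hP₁sub, hP₁crit, hP₁dis⟩ := hb1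
      have hY₁C : ∀ z ∈ C, z ∉ Y₁ := by
        intro z hzC hzY
        exact Finset.nonempty_iff_ne_empty.mp ⟨z, Finset.mem_inter.mpr ⟨hzY, hCmin P₁ hP₁crit hzC⟩⟩ hP₁dis
      by_cases hc3 : ∃ c ∈ NS, c ≠ a ∧ c ≠ b
      · obtain ⟨c, hcNS, hca, hcb⟩ := hc3
        by_cases hb2 : ∀ Y : Finset V, Y ⊆ Finset.univ.erase v → a ∈ Y → c ∈ Y →
            (G.iCount Y : ℤ) = 2 * (Y.card : ℤ) - 2 →
            ∀ P : Finset V, P ⊆ Finset.univ.erase v → G.Crit P → (Y ∩ P).Nonempty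
        · exact build a c haNS hcNS (fun h => hca h.symm)
            (fun Y hsub haY _ => hαa Y hsub haY) hb2
        · exfalso
          push_neg at hb2
          obtain ⟨Y₂, hY₂sub, haY₂, hcY₂, hi₂, P₂, hP₂sub, hP₂crit, hP₂dis⟩ := hb2
          have hY₂C : ∀ z ∈ C, z ∉ Y₂ := by
            intro z hzC hzY
            exact Finset.nonempty_iff_ne_empty.mp ⟨z, Finset.mem_inter.mpr ⟨hzY, hCmin P₂ hP₂crit hzC⟩⟩ hP₂dis
          -- NS = {a, b, c}
          have hNS3 : NS ⊆ Y₁ ∪ Y₂ := by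
            have hcard3 : ({a, b, c} : Finset V).card = 3 := by
              rw [Finset.card_insert_of_notMem (by simp [Ne.symm hba, hca.symm]),
                Finset.card_insert_of_notMem (by simp [Ne.symm hcb])]
              simp
            have hsubNS : ({a, b, c} : Finset V) ⊆ NS := by
              intro z hz
              simp only [Finset.mem_insert, Finset.mem_singleton] at hz
              rcases hz with rfl | rfl | rfl <;> assumption
            have hNSle : NS.card ≤ 3 := le_trans Finset.card_image_le (le_of_eq hS3)
            have : ({a, b, c} : Finset V) = NS :=
              Finset.eq_of_subset_of_card_le hsubNS (by omega)
            rw [← this]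
            intro z hz
            simp only [Finset.mem_insert, Finset.mem_singleton] at hz
            rcases hz with rfl | rfl | rfl
            · exact Finset.mem_union_left _ haY₁
            · exact Finset.mem_union_left _ hbY₁
            · exact Finset.mem_union_right _ hcY₂
          have hWsub : Y₁ ∪ Y₂ ⊆ Finset.univ.erase v := Finset.union_subset hY₁sub hY₂sub
          have hall : ∀ e ∈ G.edgesAt v, G.otherEnd v e ∈ Y₁ ∪ Y₂ := fun e he =>
            hNS3 (Finset.mem_image_of_mem _ he)
          have hdisW : ∀ z ∈ C, z ∉ Y₁ ∪ Y₂ := by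
            intro z hz hzW
            rcases Finset.mem_union.mp hzW with h | h
            · exact hY₁C z hz h
            · exact hY₂C z hz h
          -- the intersection
          have hIne : (Y₁ ∩ Y₂).Nonempty := ⟨a, Finset.mem_inter.mpr ⟨haY₁, haY₂⟩⟩
          have hsupmod := Multigraph.iCount_supermodular G Y₁ Y₂
          have hcardsplit := Finset.card_union_add_card_inter Y₁ Y₂
          rcases le_or_gt (G.iCount (Y₁ ∩ Y₂) : ℤ) (2 * ((Y₁ ∩ Y₂).card : ℤ) - 2)
            with hIle | hIgt
          · -- union has high count: contradiction via hkey2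
            apply hkey2 (Y₁ ∪ Y₂) hWsub hall ?_ hdisW
            push_cast at hsupmod hcardsplit ⊢
            omega
          · -- the intersection is critical: C ⊆ Y₁, contradiction
            have hIcpos : 0 < (Y₁ ∩ Y₂).card := hIne.card_pos
            have hIspan : ∃ e, G.src e ∈ Y₁ ∩ Y₂ ∧ G.dst e ∈ Y₁ ∩ Y₂ := by
              have h1 : 1 ≤ G.iCount (Y₁ ∩ Y₂) := by push_cast at hIgt; omega
              have : (Finset.univ.filter fun e =>
                  G.src e ∈ Y₁ ∩ Y₂ ∧ G.dst e ∈ Y₁ ∩ Y₂).Nonempty := by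
                rw [← Finset.card_pos]
                exact h1
              obtain ⟨e, he⟩ := this
              exact ⟨e, by simpa using (Finset.mem_filter.mp he).2⟩
            have hIsp := hsp _ hIspan
            have hIcrit : G.Crit (Y₁ ∩ Y₂) := by
              unfold Multigraph.Crit
              omega
            obtain ⟨z, hz⟩ := hCne
            exact hY₁C z hz (Finset.inter_subset_left (hCmin _ hIcrit hz))
      · -- only two neighbours: N(v) ⊆ Y₁
        exfalso
        have hall : ∀ e ∈ G.edgesAt v, G.otherEnd v e ∈ Y₁ := by
          intro e he
          have hmem : G.otherEnd v e ∈ NS := Finset.mem_image_of_mem _ he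
          by_cases h1 : G.otherEnd v e = a
          · rw [h1]; exact haY₁
          · by_cases h2 : G.otherEnd v e = b
            · rw [h2]; exact hbY₁
            · exact absurd ⟨G.otherEnd v e, hmem, h1, h2⟩ hc3
        exact hkey2 Y₁ hY₁sub hall (le_of_eq hi₁.symm) hY₁C
end

section
/- Let ⟨G,m⟩ be a gain graph with |E| = 2|V| − 1, and suppose there exist real numbers x, y₁, y₂ and a placement p : V → ℝ² such that the rigidity matrix R_x(⟨G,m⟩,p) has rank 2|V| − 1. Then E is the edge-disjoint union of the edge set of a spanning tree of G and the edge set of a spanning connected map-graph of G. -/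
/-! ### Gain graphs: multigraphs with directed edges labelled by gains in `ℤ²`. -/

structure GainGraph (V E : Type) where
  src : E → V
  dst : E → V
  gain : E → ℤ × ℤ

namespace GainGraph

variable {V E : Type}

/-- The underlying multigraph of a gain graph. -/
def toMultigraph (G : GainGraph V E) : Multigraph V E := ⟨G.src, G.dst⟩

/-- `Walk G F u w g`: there is a walk from `u` to `w` using only edges in `F`
whose net gain (traversing an edge against its direction contributes `−m(e)`) is `g`. -/
inductive Walk (G : GainGraph V E) (F : Set E) : V → V → ℤ × ℤ → Prop
  | nil (v : V) : Walk G F v v 0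
  | fwd {u : V} {g : ℤ × ℤ} {e : E} (he : e ∈ F) (h : Walk G F u (G.src e) g) :
      Walk G F u (G.dst e) (g + G.gain e)
  | bwd {u : V} {g : ℤ × ℤ} {e : E} (he : e ∈ F) (h : Walk G F u (G.dst e) g) :
      Walk G F u (G.src e) (g - G.gain e)

/-- The subgraph with edge set `F` is constructive: some closed walk has nonzero net gain. -/
def Constructive (G : GainGraph V E) (F : Set E) : Prop :=
  ∃ (v : V) (g : ℤ × ℤ), G.Walk F v v g ∧ g ≠ 0

/-- The subgraph with edge set `F` is `x`-constructive:
some closed walk has net gain with nonzero first coordinate. -/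
def XConstructive (G : GainGraph V E) (F : Set E) : Prop :=
  ∃ (v : V) (g : ℤ × ℤ), G.Walk F v v g ∧ g.1 ≠ 0

/-- The gain assignment is `T_x`-constructive: every subgraph `(X,F)` with
`|F| = 2|X| − 2` is constructive, and every one with `|F| = 2|X| − 1` is `x`-constructive. -/
def TxConstructive (G : GainGraph V E) : Prop :=
  (∀ (X : Finset V) (F : Finset E), G.toMultigraph.IsSubgraphOn X F →
      (F.card : ℤ) = 2 * (X.card : ℤ) - 2 → G.Constructive (F : Set E)) ∧
  (∀ (X : Finset V) (F : Finset E), G.toMultigraph.IsSubgraphOn X F →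
      (F.card : ℤ) = 2 * (X.card : ℤ) - 1 → G.XConstructive (F : Set E))

/-- For the lattice matrix `L` with rows `(x,0)` and `(y₁,y₂)`, the vector
`p(src e) − p(dst e) − m_e·L ∈ ℝ²`. -/
noncomputable def edgeVec (G : GainGraph V E) (x y1 y2 : ℝ) (p : V → ℝ × ℝ) (e : E) : ℝ × ℝ :=
  ((p (G.src e)).1 - (p (G.dst e)).1 - (((G.gain e).1 : ℝ) * x + ((G.gain e).2 : ℝ) * y1),
    (p (G.src e)).2 - (p (G.dst e)).2 - ((G.gain e).2 : ℝ) * y2)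

/-- The rigidity matrix `R_x(⟨G,m⟩,p)` on the `x`-variable torus: rows indexed by edges,
columns indexed by the two coordinates of each vertex (`Sum.inl` = first coordinates,
`Sum.inr ∘ Sum.inl` = second coordinates) together with one final lattice column. -/
noncomputable def rigidityMatrix [DecidableEq V] (G : GainGraph V E) (x y1 y2 : ℝ)
    (p : V → ℝ × ℝ) : Matrix E (V ⊕ V ⊕ Unit) ℝ :=
  Matrix.of fun e c =>
    Sum.elim
      (fun v => (if G.src e = v then (G.edgeVec x y1 y2 p e).1 else 0) -
        (if G.dst e = v then (G.edgeVec x y1 y2 p e).1 else 0))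
      (Sum.elim
        (fun v => (if G.src e = v then (G.edgeVec x y1 y2 p e).2 else 0) -
          (if G.dst e = v then (G.edgeVec x y1 y2 p e).2 else 0))
        (fun _ => ((G.gain e).1 : ℝ) * (G.edgeVec x y1 y2 p e).1)) c

/-- Delete a vertex together with all edges incident to it. -/
def deleteVertex (G : GainGraph V E) (v : V) :
    GainGraph {w : V // w ≠ v} {e : E // G.src e ≠ v ∧ G.dst e ≠ v} :=
  ⟨fun e => ⟨G.src e.1, e.2.1⟩, fun e => ⟨G.dst e.1, e.2.2⟩, fun e => G.gain e.1⟩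

/-- Add one new edge directed from `u` to `w` with gain `g`. -/
def addEdge (G : GainGraph V E) (u w : V) (g : ℤ × ℤ) : GainGraph V (E ⊕ Unit) :=
  ⟨Sum.elim G.src fun _ => u, Sum.elim G.dst fun _ => w, Sum.elim G.gain fun _ => g⟩

end GainGraph

open Module

section AuxSplit

variable {ι W : Type} [Fintype ι] [DecidableEq ι] [AddCommGroup W] [Module ℝ W]

set_option linter.unusedSectionVars false in
lemma exists_dual_family (v : ι → W) (hv : LinearIndependent ℝ v) :
    ∃ f : ι → (W →ₗ[ℝ] ℝ), ∀ i j, f i (v j) = if i = j then 1 else 0 := by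
  classical
  have hr := hv.linearIndepOn_id
  have hmem : ∀ i, v i ∈ hr.extend (Set.subset_univ _) := fun i =>
    hr.subset_extend _ ⟨i, rfl⟩
  refine ⟨fun i => (Basis.extend hr).coord ⟨v i, hmem i⟩, fun i j => ?_⟩
  have hbj : (Basis.extend hr) ⟨v j, hmem j⟩ = v j := Basis.extend_apply_self hr _
  have key : ((Basis.extend hr).repr (v j)) ⟨v i, hmem i⟩ = if i = j then (1:ℝ) else 0 := by
    conv_lhs => rw [← hbj]
    rw [Basis.repr_self, Finsupp.single_apply]
    by_cases h : i = j
    · subst h; simp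
    · rw [if_neg (fun hc => h (hv.injective (congrArg Subtype.val hc)).symm), if_neg h]
  simpa [Basis.coord_apply] using key

lemma split_indep (a b : ι → W) (α β : ι → ℝ)
    (hv : LinearIndependent ℝ (fun i => α i • a i + β i • b i)) :
    ∃ S : Finset ι,
      LinearIndependent ℝ (fun i : {i : ι // i ∈ S} => a i.1) ∧
      LinearIndependent ℝ (fun i : {i : ι // i ∉ S} => b i.1) := by
  classical
  obtain ⟨f, hf⟩ := exists_dual_family _ hv
  set A : ι → ι → ℝ := fun j i => f i (a j) with hA
  set B : ι → ι → ℝ := fun j i => f i (b j) with hB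
  have hdet1 : Matrix.det (Matrix.of fun j i => f i (α j • a j + β j • b j)) = 1 := by
    have h1 : (Matrix.of fun j i => f i (α j • a j + β j • b j)) = (1 : Matrix ι ι ℝ) := by
      ext j i
      rw [Matrix.of_apply, hf i j, Matrix.one_apply]
      exact if_congr eq_comm rfl rfl
    rw [h1, Matrix.det_one]
  have h1 : (Matrix.of fun j i => f i (α j • a j + β j • b j)
      : Matrix ι ι ℝ) = ((fun j => α j • A j) + fun j => β j • B j) := by
    funext j i
    simp [hA, hB, Pi.add_apply, map_add, map_smul, smul_eq_mul]
  rw [h1] at hdet1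
  have hexp : Matrix.det (((fun j => α j • A j) + fun j => β j • B j : Matrix ι ι ℝ)) =
      ∑ S : Finset ι, (∏ j, S.piecewise α β j) *
        Matrix.det (Matrix.of fun j => S.piecewise A B j) := by
    have hL : Matrix.det (((fun j => α j • A j) + fun j => β j • B j : Matrix ι ι ℝ)) =
        (Matrix.detRowAlternating : ((ι → ℝ) [⋀^ι]→ₗ[ℝ] ℝ)).toMultilinearMap
          ((fun j => α j • A j) + fun j => β j • B j) := rfl
    rw [hL, MultilinearMap.map_add_univ]
    refine Finset.sum_congr rfl fun S _ => ?_
    have hpw : S.piecewise (fun j => α j • A j) (fun j => β j • B j) =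
        fun j => (S.piecewise α β j) • (S.piecewise A B j) := by
      funext j
      by_cases hj : j ∈ S
      · simp [Finset.piecewise_eq_of_mem _ _ _ hj]
      · simp [Finset.piecewise_eq_of_notMem _ _ _ hj]
    rw [hpw, MultilinearMap.map_smul_univ]
    rfl
  rw [hexp] at hdet1
  have hne : (∑ S : Finset ι, (∏ j, S.piecewise α β j) *
      Matrix.det (Matrix.of fun j => S.piecewise A B j)) ≠ 0 := by
    rw [hdet1]; exact one_ne_zero
  obtain ⟨S, -, hS⟩ := Finset.exists_ne_zero_of_sum_ne_zero hne
  have hdetS : Matrix.det (Matrix.of fun j => S.piecewise A B j) ≠ 0 :=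
    fun hc => hS (by rw [hc, mul_zero])
  have hrows : LinearIndependent ℝ (fun j => (Matrix.of fun j => S.piecewise A B j) j) :=
    Matrix.linearIndependent_rows_iff_isUnit.mpr
      ((Matrix.isUnit_iff_isUnit_det _).mpr (isUnit_iff_ne_zero.mpr hdetS))
  have heq : (fun j => (Matrix.of fun j => S.piecewise A B j) j) =
      (LinearMap.pi f) ∘ (S.piecewise a b) := by
    funext j i
    by_cases hj : j ∈ S
    · simp [Finset.piecewise_eq_of_mem _ _ _ hj, hA, LinearMap.pi_apply, Function.comp]
    · simp [Finset.piecewise_eq_of_notMem _ _ _ hj, hB, LinearMap.pi_apply, Function.comp]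
  rw [heq] at hrows
  have hw : LinearIndependent ℝ (S.piecewise a b) := LinearIndependent.of_comp _ hrows
  refine ⟨S, ?_, ?_⟩
  · have h' := hw.comp (Subtype.val : {i : ι // i ∈ S} → ι) Subtype.val_injective
    have heq2 : (S.piecewise a b ∘ (Subtype.val : {i : ι // i ∈ S} → ι)) =
        fun i : {i : ι // i ∈ S} => a i.1 :=
      funext fun i => Finset.piecewise_eq_of_mem _ _ _ i.2
    rwa [heq2] at h'
  · have h' := hw.comp (Subtype.val : {i : ι // i ∉ S} → ι) Subtype.val_injective
    have heq2 : (S.piecewise a b ∘ (Subtype.val : {i : ι // i ∉ S} → ι)) =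
        fun i : {i : ι // i ∉ S} => b i.1 :=
      funext fun i => Finset.piecewise_eq_of_notMem _ _ _ i.2
    rwa [heq2] at h'

lemma card_bound_ker {ι W W₂ : Type} [Fintype ι] [AddCommGroup W] [Module ℝ W]
    [FiniteDimensional ℝ W] [AddCommGroup W₂] [Module ℝ W₂]
    (v : ι → W) (hv : LinearIndependent ℝ v)
    (φ : W →ₗ[ℝ] W₂) (hsurj : Function.Surjective φ) (h0 : ∀ i, φ (v i) = 0) :
    Fintype.card ι + finrank ℝ W₂ ≤ finrank ℝ W := by
  have hmem : ∀ i, v i ∈ LinearMap.ker φ := fun i => LinearMap.mem_ker.mpr (h0 i)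
  have hv' : LinearIndependent ℝ (fun i => (⟨v i, hmem i⟩ : LinearMap.ker φ)) :=
    LinearIndependent.of_comp (LinearMap.ker φ).subtype hv
  have h1 : Fintype.card ι ≤ finrank ℝ (LinearMap.ker φ) := hv'.fintype_card_le_finrank
  have h2 := LinearMap.finrank_range_add_finrank_ker φ
  have h3 : finrank ℝ (LinearMap.range φ) = finrank ℝ W₂ := by
    rw [LinearMap.range_eq_top.mpr hsurj]; exact finrank_top ℝ W₂
  omega

end AuxSplit

/-- Summation over a finset of coordinates, as a linear functional on `V → ℝ`. -/
def sumOn {V : Type} (X : Finset V) : (V → ℝ) →ₗ[ℝ] ℝ where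
  toFun y := ∑ v ∈ X, y v
  map_add' a b := Finset.sum_add_distrib
  map_smul' c a := by simp [Finset.mul_sum]

lemma exists_closed_set {V E : Type} [Fintype V] (G : GainGraph V E)
    (F : Finset E) {u w : V}
    (hno : ¬ Relation.ReflTransGen (G.toMultigraph.AdjOn (↑F)) u w) :
    ∃ X : Finset V, u ∈ X ∧ w ∉ X ∧ ∀ e ∈ F, (G.src e ∈ X ↔ G.dst e ∈ X) := by
  classical
  refine ⟨Finset.univ.filter (fun v => Relation.ReflTransGen (G.toMultigraph.AdjOn (↑F)) u v),
    by simp [Relation.ReflTransGen.refl], by simp [hno], ?_⟩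
  intro e he
  simp only [Finset.mem_filter, Finset.mem_univ, true_and]
  constructor
  · intro h
    exact h.tail ⟨e, Finset.mem_coe.mpr he, Or.inl ⟨rfl, rfl⟩⟩
  · intro h
    exact h.tail ⟨e, Finset.mem_coe.mpr he, Or.inr ⟨rfl, rfl⟩⟩


/-- If `|E| = 2|V| − 1` and the rigidity matrix attains rank
`2|V| − 1` for some `x, y₁, y₂` and some placement `p`, then `E` is the edge-disjoint
union of a spanning tree and a spanning connected map-graph. -/
theorem statement_14 {V E : Type} [Fintype V] [Fintype E] [DecidableEq V] [DecidableEq E]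
    (G : GainGraph V E) (hE : (Fintype.card E : ℤ) = 2 * (Fintype.card V : ℤ) - 1)
    (h : ∃ (x y1 y2 : ℝ) (p : V → ℝ × ℝ),
      ((G.rigidityMatrix x y1 y2 p).rank : ℤ) = 2 * (Fintype.card V : ℤ) - 1) :
    ∃ T M : Finset E, Disjoint T M ∧ T ∪ M = Finset.univ ∧
      G.toMultigraph.IsSpanningTree T ∧ G.toMultigraph.IsConnectedSpanningMapGraph M := by
  classical
  obtain ⟨x, y1, y2, p, hrank⟩ := h
  set n := Fintype.card V with hn
  have hn1 : 1 ≤ n := by omega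
  obtain ⟨u0⟩ : Nonempty V := Fintype.card_pos_iff.mp hn1
  -- rows of the rigidity matrix are linearly independent
  have hrows : LinearIndependent ℝ (fun e => G.rigidityMatrix x y1 y2 p e) := by
    rw [linearIndependent_iff_card_eq_finrank_span, Set.finrank]
    show Fintype.card E = finrank ℝ (Submodule.span ℝ (Set.range (Matrix.row (G.rigidityMatrix x y1 y2 p))))
    rw [← Matrix.rank_eq_finrank_span_row]
    have heta : (Matrix.rank fun e => G.rigidityMatrix x y1 y2 p e) =
        (G.rigidityMatrix x y1 y2 p).rank := rfl
    rw [heta]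
    omega
  -- decompose each row
  set d : E → ℝ := fun e => (G.edgeVec x y1 y2 p e).1 with hd
  set s : E → ℝ := fun e => (G.edgeVec x y1 y2 p e).2 with hs
  set inc : E → V → ℝ :=
    fun e v => (if G.src e = v then (1:ℝ) else 0) - (if G.dst e = v then 1 else 0) with hinc
  set aV : E → ((V ⊕ Unit) → ℝ) :=
    fun e => Sum.elim (inc e) (fun _ => ((G.gain e).1 : ℝ)) with haV
  set ιA : ((V ⊕ Unit) → ℝ) →ₗ[ℝ] ((V ⊕ V ⊕ Unit) → ℝ) :=
    LinearMap.pi (fun c => Sum.elim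
      (fun v => (LinearMap.proj (Sum.inl v : V ⊕ Unit) : ((V ⊕ Unit) → ℝ) →ₗ[ℝ] ℝ))
      (Sum.elim (fun _ => 0)
        (fun u => (LinearMap.proj (Sum.inr u : V ⊕ Unit) : ((V ⊕ Unit) → ℝ) →ₗ[ℝ] ℝ))) c)
    with hιA
  set ιB : (V → ℝ) →ₗ[ℝ] ((V ⊕ V ⊕ Unit) → ℝ) :=
    LinearMap.pi (fun c => Sum.elim (fun _ => 0)
      (Sum.elim (fun v => (LinearMap.proj v : (V → ℝ) →ₗ[ℝ] ℝ)) (fun _ => 0)) c) with hιB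
  have hrowdef : (fun e => G.rigidityMatrix x y1 y2 p e) =
      fun e => d e • ιA (aV e) + s e • ιB (inc e) := by
    funext e c
    rcases c with v | v | u
    · simp [GainGraph.rigidityMatrix, hιA, hιB, LinearMap.pi_apply, haV, hinc, hd, hs]
      split_ifs <;> ring
    · simp [GainGraph.rigidityMatrix, hιA, hιB, LinearMap.pi_apply, haV, hinc, hd, hs]
      split_ifs <;> ring
    · simp [GainGraph.rigidityMatrix, hιA, hιB, LinearMap.pi_apply, haV, hinc, hd, hs]
      ring
  rw [hrowdef] at hrows
  obtain ⟨S, hA, hB⟩ := split_indep (fun e => ιA (aV e)) (fun e => ιB (inc e)) d s hrows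
  have haS : LinearIndependent ℝ (fun i : {e : E // e ∈ S} => aV i.1) :=
    LinearIndependent.of_comp ιA hA
  have hbS : LinearIndependent ℝ (fun i : {e : E // e ∉ S} => inc i.1) :=
    LinearIndependent.of_comp ιB hB
  -- sums of incidence rows
  have hsum : ∀ (X : Finset V) (e : E), (∑ v ∈ X, inc e v) =
      (if G.src e ∈ X then (1:ℝ) else 0) - (if G.dst e ∈ X then 1 else 0) := by
    intro X e
    simp only [hinc]
    rw [Finset.sum_sub_distrib, Finset.sum_ite_eq, Finset.sum_ite_eq]
  -- the projection onto the first block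
  set π1 : ((V ⊕ Unit) → ℝ) →ₗ[ℝ] (V → ℝ) :=
    LinearMap.pi (fun v => (LinearMap.proj (Sum.inl v : V ⊕ Unit)
      : ((V ⊕ Unit) → ℝ) →ₗ[ℝ] ℝ)) with hπ1
  have hπ1surj : Function.Surjective π1 := fun g => ⟨Sum.elim g 0, rfl⟩
  have hπ1app : ∀ y, π1 y = fun v => y (Sum.inl v) := fun y => rfl
  -- surjectivity of the sum functionals
  have hsurj1 : Function.Surjective (sumOn (Finset.univ : Finset V)) := by
    intro t
    refine ⟨fun v => if v = u0 then t else 0, ?_⟩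
    simp [sumOn]
  have hsurj2 : ∀ (X : Finset V) (u w : V), u ∈ X → w ∉ X →
      Function.Surjective ((sumOn X).prod (sumOn Xᶜ)) := by
    intro X u w hu hw t
    refine ⟨(fun v => if v = u then t.1 else 0) + (fun v => if v = w then t.2 else 0), ?_⟩
    have h1 : (∑ v ∈ X, if v = u then t.1 else 0) = t.1 := by
      rw [Finset.sum_ite_eq' X u (fun _ => t.1), if_pos hu]
    have h2 : (∑ v ∈ X, if v = w then t.2 else 0) = 0 := by
      rw [Finset.sum_ite_eq' X w (fun _ => t.2), if_neg hw]
    have h3 : (∑ v ∈ Xᶜ, if v = u then t.1 else 0) = 0 := by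
      rw [Finset.sum_ite_eq' Xᶜ u (fun _ => t.1), if_neg (by simpa using hu)]
    have h4 : (∑ v ∈ Xᶜ, if v = w then t.2 else 0) = t.2 := by
      rw [Finset.sum_ite_eq' Xᶜ w (fun _ => t.2), if_pos (Finset.mem_compl.mpr hw)]
    have : ((sumOn X).prod (sumOn Xᶜ)) ((fun v => if v = u then t.1 else 0) +
        (fun v => if v = w then t.2 else 0)) =
        ((∑ v ∈ X, if v = u then t.1 else 0) + (∑ v ∈ X, if v = w then t.2 else 0),
         (∑ v ∈ Xᶜ, if v = u then t.1 else 0) + (∑ v ∈ Xᶜ, if v = w then t.2 else 0)) := by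
      simp [sumOn, Finset.sum_add_distrib]
    rw [this, h1, h2, h3, h4, add_zero, zero_add]
  -- finrank computations
  have hfr1 : finrank ℝ (V → ℝ) = n := by
    rw [Module.finrank_fintype_fun_eq_card]
  have hfr2 : finrank ℝ ((V ⊕ Unit) → ℝ) = n + 1 := by
    rw [Module.finrank_fintype_fun_eq_card, Fintype.card_sum, Fintype.card_unit]
  have hfrR : finrank ℝ ℝ = 1 := Module.finrank_self ℝ
  have hfrRR : finrank ℝ (ℝ × ℝ) = 2 := by
    rw [Module.finrank_prod, Module.finrank_self]
  -- cardinalities of the index types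
  have hcard1 : Fintype.card {e : E // e ∈ S} = S.card := Fintype.card_coe S
  have hcard2 : Fintype.card {e : E // e ∉ S} = Fintype.card E - S.card := by
    simp [Fintype.card_subtype_compl]
  have hSle : S.card ≤ Fintype.card E := Finset.card_le_univ S
  -- basic bound for S : |S| ≤ n
  have hboundS : S.card + 1 ≤ n + 1 := by
    have h0 : ∀ i : {e : E // e ∈ S}, ((sumOn Finset.univ).comp π1) (aV i.1) = 0 := by
      intro i
      have : π1 (aV i.1) = inc i.1 := by
        rw [hπ1app]; rfl
      rw [LinearMap.comp_apply, this]
      show (∑ v ∈ Finset.univ, inc i.1 v) = 0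
      rw [hsum]
      simp
    have hs' : Function.Surjective ((sumOn Finset.univ).comp π1) := by
      rw [LinearMap.coe_comp]
      exact hsurj1.comp hπ1surj
    have := card_bound_ker _ haS ((sumOn Finset.univ).comp π1) hs' h0
    rw [hcard1, hfrR, hfr2] at this
    exact this
  -- basic bound for Sᶜ : |Sᶜ| ≤ n - 1
  have hboundSc : (Fintype.card E - S.card) + 1 ≤ n := by
    have h0 : ∀ i : {e : E // e ∉ S}, (sumOn Finset.univ) (inc i.1) = 0 := by
      intro i
      show (∑ v ∈ Finset.univ, inc i.1 v) = 0
      rw [hsum]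
      simp
    have := card_bound_ker _ hbS (sumOn Finset.univ) hsurj1 h0
    rw [hcard2, hfrR, hfr1] at this
    exact this
  -- exact cardinalities
  have hScard : S.card = n := by omega
  have hSccard : Sᶜ.card = n - 1 := by
    rw [Finset.card_compl]
    omega
  -- connectivity of the subgraph on S
  have hconnS : ∀ u w : V, Relation.ReflTransGen (G.toMultigraph.AdjOn (↑S)) u w := by
    by_contra hc
    push_neg at hc
    obtain ⟨u, w, hno⟩ := hc
    obtain ⟨X, hu, hw, hcl⟩ := exists_closed_set G S hno
    have h0 : ∀ i : {e : E // e ∈ S},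
        (((sumOn X).prod (sumOn Xᶜ)).comp π1) (aV i.1) = 0 := by
      intro i
      have hiff := hcl i.1 i.2
      have hp : π1 (aV i.1) = inc i.1 := by rw [hπ1app]; rfl
      rw [LinearMap.comp_apply, hp]
      have e1 : (sumOn X) (inc i.1) = 0 := by
        show (∑ v ∈ X, inc i.1 v) = 0
        rw [hsum]
        by_cases hsrc : G.src i.1 ∈ X
        · simp [hsrc, hiff.mp hsrc]
        · simp [hsrc, show G.dst i.1 ∉ X from fun hd => hsrc (hiff.mpr hd)]
      have e2 : (sumOn Xᶜ) (inc i.1) = 0 := by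
        show (∑ v ∈ Xᶜ, inc i.1 v) = 0
        rw [hsum]
        by_cases hsrc : G.src i.1 ∈ X
        · simp [Finset.mem_compl, hsrc, hiff.mp hsrc]
        · simp [Finset.mem_compl, hsrc, show G.dst i.1 ∉ X from fun hd => hsrc (hiff.mpr hd)]
      show (((sumOn X).prod (sumOn Xᶜ))) (π1 (aV i.1)) = 0
      rw [hp]
      exact Prod.ext e1 e2
    have hs' : Function.Surjective (((sumOn X).prod (sumOn Xᶜ)).comp π1) := by
      rw [LinearMap.coe_comp]
      exact (hsurj2 X u w hu hw).comp hπ1surj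
    have := card_bound_ker _ haS (((sumOn X).prod (sumOn Xᶜ)).comp π1) hs' h0
    rw [hcard1, hfrRR, hfr2] at this
    omega
  -- connectivity of the subgraph on Sᶜ
  have hconnT : ∀ u w : V, Relation.ReflTransGen (G.toMultigraph.AdjOn (↑(Sᶜ))) u w := by
    by_contra hc
    push_neg at hc
    obtain ⟨u, w, hno⟩ := hc
    obtain ⟨X, hu, hw, hcl⟩ := exists_closed_set G Sᶜ hno
    have h0 : ∀ i : {e : E // e ∉ S}, ((sumOn X).prod (sumOn Xᶜ)) (inc i.1) = 0 := by
      intro i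
      have hiff := hcl i.1 (Finset.mem_compl.mpr i.2)
      have e1 : (sumOn X) (inc i.1) = 0 := by
        show (∑ v ∈ X, inc i.1 v) = 0
        rw [hsum]
        by_cases hsrc : G.src i.1 ∈ X
        · simp [hsrc, hiff.mp hsrc]
        · simp [hsrc, show G.dst i.1 ∉ X from fun hd => hsrc (hiff.mpr hd)]
      have e2 : (sumOn Xᶜ) (inc i.1) = 0 := by
        show (∑ v ∈ Xᶜ, inc i.1 v) = 0
        rw [hsum]
        by_cases hsrc : G.src i.1 ∈ X
        · simp [Finset.mem_compl, hsrc, hiff.mp hsrc]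
        · simp [Finset.mem_compl, hsrc, show G.dst i.1 ∉ X from fun hd => hsrc (hiff.mpr hd)]
      exact Prod.ext e1 e2
    have := card_bound_ker _ hbS ((sumOn X).prod (sumOn Xᶜ)) (hsurj2 X u w hu hw) h0
    rw [hcard2, hfrRR, hfr1] at this
    omega
  refine ⟨Sᶜ, S, disjoint_compl_left, ?_, ⟨hconnT, ?_⟩, ⟨hconnS, ?_⟩⟩
  · ext e
    simp only [Finset.mem_union, Finset.mem_compl, Finset.mem_univ, iff_true]
    exact (em (e ∈ S)).symm
  · omega
  · omega
end

section
/- Let ⟨G,m⟩ be a gain graph with G connected, let T be a spanning tree of G with a chosen root vertex u, for each v ∈ V let m(v,T) ∈ ℤ² be the net gain along the unique path in T from u to v, and for each edge e directed from v to w define the T-gain m_T(e) = m(v,T) + m(e) − m(w,T). Fix real numbers x, y₁, y₂, let L be the 2×2 real matrix with rows (x, 0) and (y₁, y₂), let p : V → ℝ² be any placement, and define p' : V → ℝ² by p'(v) = p(v) + m(v,T)·L. Then the rigidity matrices R_x(⟨G,m⟩,p) and R_x(⟨G,m_T⟩,p') have equal rank. -/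
/-- the `T`-gain procedure preserves the rank of the rigidity
matrix. Here `pot v = m(v,T)` is the net gain along the unique path in the spanning
tree `T` from the root `u` to `v` (characterised by `pot u = 0` together with
compatibility along the tree edges), the `T`-gains are
`m_T(e) = m(src e,T) + m(e) − m(dst e,T)`, and `p'(v) = p(v) + m(v,T)·L`. -/
theorem statement_17 {V E : Type} [Fintype V] [Fintype E] [DecidableEq V] [DecidableEq E]
    (G : GainGraph V E) (T : Finset E) (hT : G.toMultigraph.IsSpanningTree T)
    (u : V) (pot : V → ℤ × ℤ) (hu : pot u = 0)
    (hpot : ∀ e ∈ T, pot (G.dst e) = pot (G.src e) + G.gain e)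
    (x y1 y2 : ℝ) (p : V → ℝ × ℝ) :
    (G.rigidityMatrix x y1 y2 p).rank =
      (GainGraph.rigidityMatrix
        ⟨G.src, G.dst, fun e => pot (G.src e) + G.gain e - pot (G.dst e)⟩ x y1 y2
        (fun v => ((p v).1 + (((pot v).1 : ℝ) * x + ((pot v).2 : ℝ) * y1),
                   (p v).2 + ((pot v).2 : ℝ) * y2))).rank := by
  classical
  set G' : GainGraph V E :=
    ⟨G.src, G.dst, fun e => pot (G.src e) + G.gain e - pot (G.dst e)⟩ with hG'
  set p' : V → ℝ × ℝ :=
    fun v => ((p v).1 + (((pot v).1 : ℝ) * x + ((pot v).2 : ℝ) * y1),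
              (p v).2 + ((pot v).2 : ℝ) * y2) with hp'
  have hev : ∀ e, G'.edgeVec x y1 y2 p' e = G.edgeVec x y1 y2 p e := by
    intro e
    simp only [GainGraph.edgeVec, hG', hp', Prod.mk.injEq,
      Prod.fst_add, Prod.snd_add, Prod.fst_sub, Prod.snd_sub]
    constructor <;> · push_cast; ring
  set N : Matrix (V ⊕ V ⊕ Unit) (V ⊕ V ⊕ Unit) ℝ :=
    Matrix.of (fun r c =>
      Sum.elim (fun v => if c = Sum.inr (Sum.inr ()) then ((pot v).1 : ℝ) else 0)
        (fun _ => 0) r) with hN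
  have hNsq : N * N = 0 := by
    ext r c
    simp only [Matrix.mul_apply, Matrix.zero_apply, hN, Matrix.of_apply]
    apply Finset.sum_eq_zero
    intro d _
    rcases r with v | r
    · rcases d with w | d
      · simp
      · simp
    · simp
  have hUnit : IsUnit (1 + N).det := by
    refine Matrix.isUnit_det_of_right_inverse (B := 1 - N) ?_
    have h1 : (1 + N) * (1 - N) = 1 + N - N - N * N := by noncomm_ring
    rw [h1, hNsq, sub_zero, add_sub_cancel_right]
  have key : ∀ (k : ℝ) (a b : V) (q : V → ℝ),
      (∑ v, ((if a = v then k else 0) - (if b = v then k else 0)) * q v)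
        = k * q a - k * q b := by
    intro k a b q
    simp [sub_mul, Finset.sum_sub_distrib, ite_mul, Finset.sum_ite_eq]
  have hMul : G'.rigidityMatrix x y1 y2 p' = G.rigidityMatrix x y1 y2 p * (1 + N) := by
    ext e c
    rw [Matrix.mul_add, Matrix.mul_one, Matrix.add_apply]
    have hMN0 : ∀ (c : V ⊕ V ⊕ Unit), c ≠ Sum.inr (Sum.inr ()) →
        (G.rigidityMatrix x y1 y2 p * N) e c = 0 := by
      intro c hc
      simp only [Matrix.mul_apply, hN, Matrix.of_apply]
      apply Finset.sum_eq_zero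
      intro d _
      rcases d with v | d
      · simp [hc]
      · simp
    rcases c with w | w | t
    · rw [hMN0 _ (by simp), add_zero]
      simp only [GainGraph.rigidityMatrix, Matrix.of_apply, Sum.elim_inl, hev, hG']
      rw [← hG', hev]
    · rw [hMN0 _ (by simp), add_zero]
      simp only [GainGraph.rigidityMatrix, Matrix.of_apply, Sum.elim_inr, Sum.elim_inl, hev, hG']
      rw [← hG', hev]
    · obtain ⟨⟩ := t
      have hMN : (G.rigidityMatrix x y1 y2 p * N) e (Sum.inr (Sum.inr ())) =
          (G.edgeVec x y1 y2 p e).1 * ((pot (G.src e)).1 : ℝ)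
            - (G.edgeVec x y1 y2 p e).1 * ((pot (G.dst e)).1 : ℝ) := by
        simp only [Matrix.mul_apply, hN, Matrix.of_apply, Fintype.sum_sum_type,
          Sum.elim_inl, Sum.elim_inr, eq_self_iff_true, if_true, mul_zero,
          Finset.sum_const_zero, add_zero]
        simp only [GainGraph.rigidityMatrix, Matrix.of_apply, Sum.elim_inl]
        exact key _ _ _ _
      rw [hMN]
      simp only [GainGraph.rigidityMatrix, Matrix.of_apply, Sum.elim_inr, hev, hG']
      simp only [Prod.fst_add, Prod.fst_sub]
      push_cast
      rw [← hG', hev]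
      ring
  rw [hMul, Matrix.rank_mul_eq_left_of_isUnit_det _ _ hUnit]
end
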